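/- Let (J, J̄) be any partition of [n] and f a randomized function F_q^n → F_q with correlation |E_{x,f}[e(f(x))·conjugate(e(χ_α(x)))]| ≥ ρ for some α ∈ F_q^n. Then there exist a₁, a₂ ∈ F_q such that Pr_{x,f}[f(x) − χ_{α^J}(x) − a₁ = a₂ and χ_{α^{J̄}}(x) = a₂] ≥ 1/q² + ρ/q³. -/

import Mathlib

/-- The additive character `e(a) = exp(2πi·Tr(a)/p)` of a finite field of characteristic `p`. -/
noncomputable def ec (p : ℕ) {F : Type*} [Field F] [Algebra (ZMod p) F] (a : F) : ℂ :=
  Complex.exp (2 * Real.pi * Complex.I * ((Algebra.trace (ZMod p) F a).val : ℂ) / p)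

/-- The linear function `χ_α(x) = Σ_i α_i x_i` over `F_q`. -/
def chi {F : Type*} [Field F] {n : ℕ} (α x : Fin n → F) : F := ∑ i, α i * x i

section Aux

variable (p : ℕ) [hp : Fact p.Prime] {F : Type*} [Field F] [Fintype F] [Algebra (ZMod p) F]

/-- The primitive `p`-th root of unity. -/
noncomputable def zet : ℂ := Complex.exp (2 * Real.pi * Complex.I / p)

lemma zet_prim : IsPrimitiveRoot (zet p) p :=
  Complex.isPrimitiveRoot_exp p hp.out.ne_zero

lemma ec_eq (a : F) : ec p a = zet p ^ (Algebra.trace (ZMod p) F a).val := by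
  rw [zet, ← Complex.exp_nat_mul, ec]
  congr 1
  ring

lemma ec_add (a b : F) : ec p (a + b) = ec p a * ec p b := by
  rw [ec_eq, ec_eq, ec_eq, map_add, ← pow_add, ZMod.val_add]
  exact (pow_eq_pow_mod _ (zet_prim p).pow_eq_one).symm

lemma ec_ne_zero (a : F) : ec p a ≠ 0 := Complex.exp_ne_zero _

lemma ec_abs (a : F) : ‖ec p a‖ = 1 := by
  rw [ec_eq, norm_pow]
  have h : zet p = Complex.exp (((2 * Real.pi / p : ℝ) : ℂ) * Complex.I) := by
    rw [zet]; congr 1; push_cast; ring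
  rw [h, Complex.norm_exp_ofReal_mul_I, one_pow]

lemma ec_conj (a : F) : (starRingEnd ℂ) (ec p a) = (ec p a)⁻¹ :=
  (Complex.inv_eq_conj (ec_abs p a)).symm

lemma ec_mul_conj (b c : F) :
    ec p b * (starRingEnd ℂ) (ec p c) = ec p (b - c) := by
  rw [ec_conj, mul_inv_eq_iff_eq_mul₀ (ec_ne_zero p c), ← ec_add, sub_add_cancel]

lemma ec_sum : ∑ a : F, ec p a = 0 := by
  have : FiniteDimensional (ZMod p) F := Module.Finite.of_finite
  have htr := Algebra.trace_ne_zero (ZMod p) F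
  obtain ⟨a₀, ha₀⟩ : ∃ a : F, Algebra.trace (ZMod p) F a ≠ 0 := by
    by_contra h
    push_neg at h
    exact htr (LinearMap.ext h)
  have hne : ec p a₀ ≠ 1 := by
    rw [ec_eq]
    refine (zet_prim p).pow_ne_one_of_pos_of_lt ?_ (ZMod.val_lt _)
    exact (fun h => ha₀ (by rwa [← ZMod.val_eq_zero]))
  have hshift : ec p a₀ * ∑ a : F, ec p a = ∑ a : F, ec p a := by
    rw [Finset.mul_sum]
    calc ∑ a : F, ec p a₀ * ec p a = ∑ a : F, ec p (a₀ + a) := by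
          exact Finset.sum_congr rfl fun a _ => (ec_add p a₀ a).symm
      _ = ∑ a : F, ec p a := Fintype.sum_equiv (Equiv.addLeft a₀) _ _ (fun a => rfl)
  have : (ec p a₀ - 1) * ∑ a : F, ec p a = 0 := by ring_nf; linear_combination hshift
  rcases mul_eq_zero.mp this with h | h
  · exact absurd (sub_eq_zero.mp h) hne
  · exact h

/-- From correlation to a heavy point. -/
lemma key_heavy (P : F → ℝ) (h0 : ∀ a, 0 ≤ P a) (h1 : ∑ a, P a = 1) (ρ : ℝ)
    (hρ : ρ ≤ ‖∑ a : F, (P a : ℂ) * ec p a‖) :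
    ∃ a₁ : F, 1 / (Fintype.card F : ℝ) + ρ / (Fintype.card F : ℝ) ^ 2 ≤ P a₁ := by
  set q : ℝ := (Fintype.card F : ℝ) with hqdef
  have hq2 : (2 : ℝ) ≤ q := by
    have : 1 < Fintype.card F := Fintype.one_lt_card
    rw [hqdef]; exact_mod_cast this
  have hq0 : (0 : ℝ) < q := by linarith
  obtain ⟨a₁, -, hmax⟩ := Finset.exists_max_image Finset.univ P Finset.univ_nonempty
  have hM : 1 ≤ q * P a₁ := by
    have := Finset.sum_le_card_nsmul Finset.univ P (P a₁)
      (fun x _ => hmax x (Finset.mem_univ x))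
    rw [h1, Finset.card_univ, nsmul_eq_mul] at this
    exact_mod_cast this
  have hMq : 1 / q ≤ P a₁ := by rw [div_le_iff₀ hq0]; linarith
  refine ⟨a₁, ?_⟩
  rcases le_or_gt ρ 0 with hρ0 | hρ0
  · have : ρ / q ^ 2 ≤ 0 := div_nonpos_of_nonpos_of_nonneg hρ0 (by positivity)
    linarith
  · -- subtract the uniform part
    have hzero : ∑ a : F, ((1 / q : ℝ) : ℂ) * ec p a = 0 := by
      rw [← Finset.mul_sum, ec_sum, mul_zero]
    have hsub : (∑ a : F, (P a : ℂ) * ec p a)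
        = ∑ a : F, ((P a - 1 / q : ℝ) : ℂ) * ec p a := by
      rw [← sub_eq_zero, ← Finset.sum_sub_distrib, ← hzero]
      refine Finset.sum_congr rfl fun a _ => ?_
      push_cast
      ring
    have habs : ‖∑ a : F, ((P a - 1 / q : ℝ) : ℂ) * ec p a‖
        ≤ ∑ a : F, |P a - 1 / q| := by
      refine le_trans (norm_sum_le _ _) (le_of_eq ?_)
      refine Finset.sum_congr rfl fun a _ => ?_
      rw [norm_mul, ec_abs, mul_one, Complex.norm_real, Real.norm_eq_abs]
    have hterm : ∀ a : F, |P a - 1 / q| ≤ (P a₁ - P a) + (P a₁ - 1 / q) := by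
      intro a
      rw [abs_sub_le_iff]
      constructor
      · have := hmax a (Finset.mem_univ a)
        linarith
      · have := hmax a (Finset.mem_univ a)
        linarith
    have hsumbound : ∑ a : F, |P a - 1 / q| ≤ 2 * q * P a₁ - 2 := by
      calc ∑ a : F, |P a - 1 / q|
          ≤ ∑ a : F, ((P a₁ - P a) + (P a₁ - 1 / q)) :=
            Finset.sum_le_sum fun a _ => hterm a
        _ = q * P a₁ - 1 + (q * P a₁ - q * (1 / q)) := by
            rw [Finset.sum_add_distrib, Finset.sum_sub_distrib, Finset.sum_sub_distrib,
              h1, Finset.sum_const, Finset.sum_const, Finset.card_univ,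
              nsmul_eq_mul, nsmul_eq_mul, ← hqdef]
        _ = 2 * q * P a₁ - 2 := by
            rw [mul_one_div_cancel (ne_of_gt hq0)]
            ring
    have hρ2 : ρ ≤ 2 * q * P a₁ - 2 := by
      calc ρ ≤ ‖∑ a : F, (P a : ℂ) * ec p a‖ := hρ
        _ = ‖∑ a : F, ((P a - 1 / q : ℝ) : ℂ) * ec p a‖ := by rw [hsub]
        _ ≤ ∑ a : F, |P a - 1 / q| := habs
        _ ≤ 2 * q * P a₁ - 2 := hsumbound
    have hgoal : 1 / q + ρ / q ^ 2 = (q + ρ) / q ^ 2 := by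
      field_simp
    rw [hgoal, div_le_iff₀ (by positivity)]
    nlinarith [mul_le_mul_of_nonneg_left hρ2 (le_of_lt hq0),
      mul_nonneg (sub_nonneg.mpr hq2) (le_of_lt hρ0)]

end Aux

lemma chi_split {F : Type*} [Field F] {n : ℕ} (J : Finset (Fin n)) (α x : Fin n → F) :
    chi α x = chi (fun i => if i ∈ J then α i else 0) x
      + chi (fun i => if i ∈ J then 0 else α i) x := by
  unfold chi
  rw [← Finset.sum_add_distrib]
  refine Finset.sum_congr rfl fun i _ => ?_
  by_cases h : i ∈ J <;> simp [h]

/-- Let `(J, J̄)` be any partition of `[n]` and `f` a randomized function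
`F_q^n → F_q` (modeled by its conditional distribution `f x : F_q → ℝ` for each input `x`)
with correlation `|E_{x,f}[e(f(x))·conj(e(χ_α(x)))]| ≥ ρ`. Then there exist `a₁, a₂ ∈ F_q`
such that `Pr_{x,f}[f(x) − χ_{α^J}(x) − a₁ = a₂ ∧ χ_{α^{J̄}}(x) = a₂] ≥ 1/q² + ρ/q³`. -/
theorem stmt_19 (p ℓ : ℕ) [Fact p.Prime] {F : Type*} [Field F] [Fintype F] [DecidableEq F]
    [Algebra (ZMod p) F] (hq : Fintype.card F = p ^ ℓ) {n : ℕ}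
    (J : Finset (Fin n)) (α : Fin n → F)
    (f : (Fin n → F) → F → ℝ) (hf0 : ∀ x b, 0 ≤ f x b) (hf1 : ∀ x, ∑ b, f x b = 1)
    (ρ : ℝ)
    (hcor : ρ ≤ ‖((∑ x : Fin n → F, ∑ b : F, (f x b : ℂ) * ec p b *
        (starRingEnd ℂ) (ec p (chi α x))) / (Fintype.card (Fin n → F) : ℂ))‖) :
    ∃ a₁ a₂ : F,
      1 / (Fintype.card F : ℝ) ^ 2 + ρ / (Fintype.card F : ℝ) ^ 3 ≤
        (∑ x : Fin n → F,
          if chi (fun i => if i ∈ J then 0 else α i) x = a₂ then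
            f x (chi (fun i => if i ∈ J then α i else 0) x + a₁ + a₂) else 0) /
          (Fintype.card (Fin n → F) : ℝ) := by
  classical
  set N : ℕ := Fintype.card (Fin n → F) with hNdef
  have hN0 : (0 : ℝ) < N := by exact_mod_cast (Fintype.card_pos : 0 < N)
  have hNC : (N : ℂ) ≠ 0 := by exact_mod_cast ne_of_gt (show 0 < N from Fintype.card_pos)
  set qn : ℕ := Fintype.card F with hqn
  have hq1 : 1 < qn := Fintype.one_lt_card
  have hq0 : (0 : ℝ) < (qn : ℝ) := by positivity
  -- the "probability" of each offset a
  set P : F → ℝ := fun a => (∑ x : Fin n → F, f x (chi α x + a)) / N with hPdef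
  have hP0 : ∀ a, 0 ≤ P a := fun a => by
    apply div_nonneg _ (le_of_lt hN0)
    exact Finset.sum_nonneg fun x _ => hf0 x _
  have hreindex : ∀ x : Fin n → F, ∑ a : F, f x (chi α x + a) = 1 := by
    intro x
    rw [← hf1 x]
    exact Fintype.sum_equiv (Equiv.addLeft (chi α x)) _ _ (fun a => rfl)
  have hP1 : ∑ a : F, P a = 1 := by
    rw [hPdef]
    simp only
    rw [← Finset.sum_div, Finset.sum_comm]
    simp only [hreindex]
    rw [Finset.sum_const, Finset.card_univ, nsmul_eq_mul, mul_one, ← hNdef,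
      div_self (ne_of_gt hN0)]
  -- rewrite the correlation sum
  have hstep1 : ∀ x : Fin n → F,
      ∑ b : F, (f x b : ℂ) * ec p b * (starRingEnd ℂ) (ec p (chi α x))
        = ∑ a : F, (f x (chi α x + a) : ℂ) * ec p a := by
    intro x
    rw [← Equiv.sum_comp (Equiv.addLeft (chi α x))
      (fun b => (f x b : ℂ) * ec p b * (starRingEnd ℂ) (ec p (chi α x)))]
    refine Finset.sum_congr rfl fun a _ => ?_
    simp only [Equiv.coe_addLeft]
    rw [mul_assoc, ec_mul_conj, add_sub_cancel_left]
  have hS : (∑ x : Fin n → F, ∑ b : F, (f x b : ℂ) * ec p b *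
      (starRingEnd ℂ) (ec p (chi α x))) = (N : ℂ) * ∑ a : F, (P a : ℂ) * ec p a := by
    calc (∑ x : Fin n → F, ∑ b : F, (f x b : ℂ) * ec p b *
          (starRingEnd ℂ) (ec p (chi α x)))
        = ∑ x : Fin n → F, ∑ a : F, (f x (chi α x + a) : ℂ) * ec p a := by
          exact Finset.sum_congr rfl fun x _ => hstep1 x
      _ = ∑ a : F, (∑ x : Fin n → F, (f x (chi α x + a) : ℝ) : ℂ) * ec p a := by
          rw [Finset.sum_comm]
          refine Finset.sum_congr rfl fun a _ => ?_
          push_cast [Finset.sum_mul]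
          rfl
      _ = (N : ℂ) * ∑ a : F, (P a : ℂ) * ec p a := by
          rw [Finset.mul_sum]
          refine Finset.sum_congr rfl fun a _ => ?_
          rw [hPdef]
          push_cast
          field_simp
  have hcor' : ρ ≤ ‖∑ a : F, (P a : ℂ) * ec p a‖ := by
    have : ((∑ x : Fin n → F, ∑ b : F, (f x b : ℂ) * ec p b *
        (starRingEnd ℂ) (ec p (chi α x))) / (N : ℂ))
        = ∑ a : F, (P a : ℂ) * ec p a := by
      rw [hS, mul_div_assoc, mul_comm, div_mul_cancel₀ _ hNC]
    rw [← this]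
    exact hcor
  obtain ⟨a₁, ha₁⟩ := key_heavy p P hP0 hP1 ρ hcor'
  -- decompose over the value a₂ of χ_{α^J̄}
  set T : F → ℝ := fun a₂ => ∑ x : Fin n → F,
    if chi (fun i => if i ∈ J then 0 else α i) x = a₂ then
      f x (chi (fun i => if i ∈ J then α i else 0) x + a₁ + a₂) else 0 with hTdef
  have hT0 : ∀ a₂, 0 ≤ T a₂ := fun a₂ => Finset.sum_nonneg fun x _ => by
    split <;> [exact hf0 x _; exact le_refl 0]
  have hTsum : ∑ a₂ : F, T a₂ = N * P a₁ := by
    rw [hTdef]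
    simp only
    rw [Finset.sum_comm]
    have hx : ∀ x : Fin n → F,
        (∑ a₂ : F, if chi (fun i => if i ∈ J then 0 else α i) x = a₂ then
          f x (chi (fun i => if i ∈ J then α i else 0) x + a₁ + a₂) else 0)
        = f x (chi α x + a₁) := by
      intro x
      rw [Finset.sum_ite_eq Finset.univ (chi (fun i => if i ∈ J then 0 else α i) x)
        (fun a₂ => f x (chi (fun i => if i ∈ J then α i else 0) x + a₁ + a₂))]
      simp only [Finset.mem_univ, if_true]
      congr 1
      have := chi_split J α x
      linear_combination -this
    simp only [hx]
    rw [hPdef]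
    simp only
    rw [mul_comm, div_mul_cancel₀ _ (ne_of_gt hN0)]
  obtain ⟨a₂, -, hmax2⟩ := Finset.exists_max_image Finset.univ T Finset.univ_nonempty
  have hq2 : (qn : ℝ) * T a₂ ≥ N * P a₁ := by
    have := Finset.sum_le_card_nsmul Finset.univ T (T a₂)
      (fun x _ => hmax2 x (Finset.mem_univ x))
    rw [hTsum, Finset.card_univ, nsmul_eq_mul] at this
    exact_mod_cast this
  refine ⟨a₁, a₂, ?_⟩
  have key : P a₁ / (qn : ℝ) ≤ T a₂ / N := by
    rw [div_le_div_iff₀ hq0 hN0]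
    nlinarith [hq2]
  calc 1 / (qn : ℝ) ^ 2 + ρ / (qn : ℝ) ^ 3
      = (1 / (qn : ℝ) + ρ / (qn : ℝ) ^ 2) / (qn : ℝ) := by
        field_simp
    _ ≤ P a₁ / (qn : ℝ) := by gcongr
    _ ≤ T a₂ / N := key
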